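/- Let K be a convex weak*-compact subset of a dual Banach space X* and let η be a homogeneous (η(λA) = |λ| η(A)) and translation-invariant (η(A + x*) = η(A)) measure of non-compactness on X*. Then: (i) for every ε > 0 and every ordinal α, ½ [η]^α_ε(K) + ½ K ⊆ [η]^α_{ε/2}(K); (ii) for every ε > 0, every n ∈ ℕ and every ordinal α, [η]^α_ε(K) ⊆ [η]^{α·2^n}_{ε/2^n}(K). -/

import Mathlib

open Filter Topology Set Pointwise

noncomputable section

namespace Szlenk

variable {E : Type*}

/-- The fragment derivation `[η]'_ε(A)` associated to a set function `η`:
the points of `A` all of whose neighborhoods `U` satisfy `η (A ∩ cl U) ≥ ε`. -/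
def frag [TopologicalSpace E] (η : Set E → ℝ) (ε : ℝ) (A : Set E) : Set E :=
  {x | x ∈ A ∧ ∀ U ∈ 𝓝 x, ε ≤ η (A ∩ closure U)}

/-- Transfinite iterates `[η]^γ_ε(A)` of the fragment derivation. -/
def fragIter [TopologicalSpace E] (η : Set E → ℝ) (ε : ℝ) (A : Set E) (γ : Ordinal.{0}) :
    Set E :=
  Ordinal.limitRecOn γ A (fun _ S => frag η ε S)
    (fun γ _ ih => ⋂ β : {β : Ordinal.{0} // β < γ}, ih β.1 β.2)

/-- The `ω`-iterated measure `η^ω (A) = inf {ε > 0 : [η]^ω_ε(A) = ∅}`. -/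
def etaOmega [TopologicalSpace E] (η : Set E → ℝ) (A : Set E) : ℝ :=
  sInf {ε : ℝ | 0 < ε ∧ fragIter η ε A Ordinal.omega0 = ∅}

/-- The iterates `η^{ω^n}` (with `η^{ω^0} := η` and `η^{ω^{n+1}} := (η^{ω^n})^ω`). -/
def omegaPow [TopologicalSpace E] (η : Set E → ℝ) : ℕ → Set E → ℝ
  | 0 => η
  | n + 1 => etaOmega (omegaPow η n)

/-- `η` is a measure of non compactness (with respect to the closed unit ball `ball`):
it is nonnegative, vanishes on singletons, is monotone, satisfies
`η (A ∪ B) = max (η A) (η B)`, and `η (A + l • ball) ≤ η A + l * b` for some `b > 0`.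
All conditions are required on (weak*-)compact sets only. -/
structure IsMNCOn [TopologicalSpace E] [AddCommGroup E] [Module ℝ E]
    (ball : Set E) (η : Set E → ℝ) : Prop where
  nonneg : ∀ A : Set E, IsCompact A → 0 ≤ η A
  singleton : ∀ x : E, η {x} = 0
  mono : ∀ A B : Set E, IsCompact A → IsCompact B → A ⊆ B → η A ≤ η B
  union : ∀ A B : Set E, IsCompact A → IsCompact B → η (A ∪ B) = max (η A) (η B)
  ball_add : ∃ b > 0, ∀ A : Set E, IsCompact A → ∀ l : ℝ, 0 < l →
    η (A + l • ball) ≤ η A + l * b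

/-- `η` is a measure of non compactness with the explicit constant `b` in property (iii). -/
structure IsMNCWith [TopologicalSpace E] [AddCommGroup E] [Module ℝ E]
    (ball : Set E) (b : ℝ) (η : Set E → ℝ) : Prop where
  b_pos : 0 < b
  nonneg : ∀ A : Set E, IsCompact A → 0 ≤ η A
  singleton : ∀ x : E, η {x} = 0
  mono : ∀ A B : Set E, IsCompact A → IsCompact B → A ⊆ B → η A ≤ η B
  union : ∀ A B : Set E, IsCompact A → IsCompact B → η (A ∪ B) = max (η A) (η B)
  ball_add : ∀ A : Set E, IsCompact A → ∀ l : ℝ, 0 < l →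
    η (A + l • ball) ≤ η A + l * b

/-- A sublinear measure of non compactness: homogeneous and subadditive. -/
structure IsSublinear [TopologicalSpace E] [AddCommGroup E] [Module ℝ E]
    (η : Set E → ℝ) : Prop where
  homog : ∀ (l : ℝ) (A : Set E), IsCompact A → η (l • A) = |l| * η A
  subadd : ∀ A B : Set E, IsCompact A → IsCompact B → η (A + B) ≤ η A + η B

variable {X : Type*} [NormedAddCommGroup X] [NormedSpace ℝ X]

/-- The dual norm on `X*` (the dual being equipped with its weak* topology). -/
def dnorm (f : WeakDual ℝ X) : ℝ := ‖WeakDual.toStrongDual f‖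

/-- The closed unit ball of `X*`. -/
def dualBall (X : Type*) [NormedAddCommGroup X] [NormedSpace ℝ X] :
    Set (WeakDual ℝ X) := {f | dnorm f ≤ 1}

/-- The slice derivation `⟨η⟩'_ε(A)`: the points of `A` such that every weak*-closed
halfspace containing them meets `A` in a set of `η`-measure at least `ε`. -/
def sliceD (η : Set (WeakDual ℝ X) → ℝ) (ε : ℝ) (A : Set (WeakDual ℝ X)) :
    Set (WeakDual ℝ X) :=
  {x | x ∈ A ∧ ∀ (f : X) (c : ℝ), c ≤ x f → ε ≤ η (A ∩ {y | c ≤ y f})}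

/-- Transfinite iterates `⟨η⟩^γ_ε(A)` of the slice derivation. -/
def sliceIter (η : Set (WeakDual ℝ X) → ℝ) (ε : ℝ) (A : Set (WeakDual ℝ X))
    (γ : Ordinal.{0}) : Set (WeakDual ℝ X) :=
  Ordinal.limitRecOn γ A (fun _ S => sliceD η ε S)
    (fun γ _ ih => ⋂ β : {β : Ordinal.{0} // β < γ}, ih β.1 β.2)

/-- A weak*-closed halfspace of `X*`. -/
def IsHalfspace (H : Set (WeakDual ℝ X)) : Prop :=
  ∃ (f : X) (c : ℝ), H = {y : WeakDual ℝ X | c ≤ y f}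

/-- The Kuratowski measure of non compactness associated to a (dual) norm `Nd`:
the infimum of all `ε > 0` such that `A` can be covered by finitely many balls of
diameter `ε` (i.e. of radius `ε / 2`). -/
def kurN (Nd : WeakDual ℝ X → ℝ) (A : Set (WeakDual ℝ X)) : ℝ :=
  sInf {ε : ℝ | 0 < ε ∧
    ∃ F : Finset (WeakDual ℝ X), A ⊆ ⋃ c ∈ F, {y | Nd (y - c) ≤ ε / 2}}

/-- The Kuratowski measure of non compactness on `X*`. -/
def kur (A : Set (WeakDual ℝ X)) : ℝ := kurN dnorm A

/-- The iterated sets `A^ε_β` of the convex Szlenk derivation: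
`A^ε_{β+1}` is the weak*-closed convex hull of `[σ]'_ε(A^ε_β)`. -/
def convIter (ε : ℝ) (K : Set (WeakDual ℝ X)) (γ : Ordinal.{0}) : Set (WeakDual ℝ X) :=
  Ordinal.limitRecOn γ K (fun _ S => closure (convexHull ℝ (frag kur ε S)))
    (fun γ _ ih => ⋂ β : {β : Ordinal.{0} // β < γ}, ih β.1 β.2)

/-- The families `𝒯_α` of trees on `ℕ`. A tree is a set of finite sequences of
naturals (closed under initial segments); the root is the empty sequence, and
`(n)⌢s` is represented by `n :: s`. `𝒯_0 = {{∅}}`, and `T ∈ 𝒯_α` for `α ≥ 1` if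
`T = {∅} ∪ ⋃_k (n_k)⌢T_k` with `n_k` strictly increasing, `T_k ∈ 𝒯_{α_k}`, where
`α_k = β` for all `k` if `α = β + 1`, and `α_k ↗ α` if `α` is a limit ordinal. -/
inductive IsTreeFam : Ordinal.{0} → Set (List ℕ) → Prop
  | zero : IsTreeFam 0 {[]}
  | node {α : Ordinal.{0}} (nk : ℕ → ℕ) (αk : ℕ → Ordinal.{0}) (Tk : ℕ → Set (List ℕ))
      (hnk : StrictMono nk) (hTk : ∀ k, IsTreeFam (αk k) (Tk k))
      (hα : (∃ β, α = β + 1 ∧ ∀ k, αk k = β) ∨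
            (Order.IsSuccLimit α ∧ StrictMono αk ∧ α = ⨆ k, αk k)) :
      IsTreeFam α ({[]} ∪ ⋃ k, (List.cons (nk k)) '' Tk k)

/-- A family `(x_s)_{s ∈ T}` is weak*-continuous: `x_{s⌢n} → x_s` (in the ambient,
i.e. weak*, topology) along the children of every node `s` of `T`. -/
def IsContFam [TopologicalSpace E] (T : Set (List ℕ)) (x : List ℕ → E) : Prop :=
  ∀ s ∈ T, Tendsto (fun n : ℕ => x (s ++ [n]))
    (atTop ⊓ 𝓟 {n : ℕ | s ++ [n] ∈ T}) (𝓝 (x s))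

/-- A family `(x_s)_{s ∈ T}` in `X*` is `ε`-separated: `‖x_s - x_{s⌢n}‖ ≥ ε`. -/
def IsSepFam (ε : ℝ) (T : Set (List ℕ)) (x : List ℕ → WeakDual ℝ X) : Prop :=
  ∀ s ∈ T, ∀ n : ℕ, s ++ [n] ∈ T → ε ≤ dnorm (x s - x (s ++ [n]))

/-- Norm distance from a point of `X*` to a subset of `X*`. -/
def ddist (f : WeakDual ℝ X) (A : Set (WeakDual ℝ X)) : ℝ :=
  sInf ((fun g => dnorm (f - g)) '' A)

/-- The product `η₁ × η₂` of two measures of non compactness. -/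
def prodMNC {X₁ X₂ : Type*} [NormedAddCommGroup X₁] [NormedSpace ℝ X₁]
    [NormedAddCommGroup X₂] [NormedSpace ℝ X₂]
    (η₁ : Set (WeakDual ℝ X₁) → ℝ) (η₂ : Set (WeakDual ℝ X₂) → ℝ)
    (A : Set (WeakDual ℝ X₁ × WeakDual ℝ X₂)) : ℝ :=
  sInf {ε : ℝ | 0 < ε ∧ ∃ (n : ℕ) (A₁ : Fin n → Set (WeakDual ℝ X₁))
      (A₂ : Fin n → Set (WeakDual ℝ X₂)),
      (∀ i, IsCompact (A₁ i) ∧ IsCompact (A₂ i) ∧ η₁ (A₁ i) < ε ∧ η₂ (A₂ i) < ε) ∧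
      A ⊆ ⋃ i, A₁ i ×ˢ A₂ i}

/-- The dual norm on `X*` associated to an (equivalent) norm `N` on `X`. -/
def dualNormOf (N : X → ℝ) (f : WeakDual ℝ X) : ℝ :=
  sSup ((fun x => f x) '' {x : X | N x ≤ 1})

/-- The closed unit ball of the dual norm associated to a norm `N` on `X`. -/
def dualBallOf (N : X → ℝ) : Set (WeakDual ℝ X) :=
  {f : WeakDual ℝ X | ∀ x : X, |f x| ≤ N x}

section Aux

variable {F : Type*} [TopologicalSpace F]

lemma frag_subset (η : Set F → ℝ) (ε : ℝ) (A : Set F) : frag η ε A ⊆ A :=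
  fun _ h => h.1

lemma fragIter_zero (η : Set F → ℝ) (ε : ℝ) (A : Set F) : fragIter η ε A 0 = A :=
  Ordinal.limitRecOn_zero _ _ _

lemma fragIter_succ (η : Set F → ℝ) (ε : ℝ) (A : Set F) (γ : Ordinal.{0}) :
    fragIter η ε A (Order.succ γ) = frag η ε (fragIter η ε A γ) :=
  Ordinal.limitRecOn_succ _ _ _ _

lemma fragIter_limit (η : Set F → ℝ) (ε : ℝ) (A : Set F) {γ : Ordinal.{0}}
    (hγ : Order.IsSuccLimit γ) :
    fragIter η ε A γ = ⋂ β : {β : Ordinal.{0} // β < γ}, fragIter η ε A β.1 :=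
  Ordinal.limitRecOn_limit _ _ _ _ hγ

lemma isClosed_frag (η : Set F → ℝ) (ε : ℝ) {A : Set F} (hA : IsClosed A) :
    IsClosed (frag η ε A) := by
  refine isClosed_of_closure_subset fun x hx => ?_
  refine ⟨hA.closure_subset (closure_mono (frag_subset η ε A) hx), fun U hU => ?_⟩
  obtain ⟨y, hyU, hyf⟩ :=
    mem_closure_iff_nhds.mp hx (interior U) (interior_mem_nhds.mpr hU)
  exact hyf.2 U (mem_interior_iff_mem_nhds.mp hyU)

lemma fragIter_antitone (η : Set F → ℝ) (ε : ℝ) (A : Set F) :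
    ∀ γ β : Ordinal.{0}, β ≤ γ → fragIter η ε A γ ⊆ fragIter η ε A β := by
  intro γ
  induction γ using Ordinal.induction with
  | _ γ IH =>
    intro β hβ
    rcases eq_or_lt_of_le hβ with rfl | hβ
    · exact subset_rfl
    rcases Ordinal.zero_or_succ_or_isSuccLimit γ with h0 | ⟨δ, rfl⟩ | hlim
    · exact absurd (h0 ▸ hβ) (not_lt_zero (a := β))
    · rw [fragIter_succ]
      exact (frag_subset _ _ _).trans
        (IH δ (Order.lt_succ δ) β (Order.lt_succ_iff.mp hβ))
    · rw [fragIter_limit η ε A hlim]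
      exact Set.iInter_subset _ (⟨β, hβ⟩ : {b : Ordinal.{0} // b < γ})

variable [T2Space F]

lemma fragIter_isCompact (η : Set F → ℝ) (ε : ℝ) {A : Set F} (hA : IsCompact A)
    (γ : Ordinal.{0}) : IsCompact (fragIter η ε A γ) ∧ fragIter η ε A γ ⊆ A := by
  induction γ using Ordinal.induction with
  | _ γ IH =>
    rcases Ordinal.zero_or_succ_or_isSuccLimit γ with h0 | ⟨δ, rfl⟩ | hlim
    · subst h0; rw [fragIter_zero]; exact ⟨hA, subset_rfl⟩
    · obtain ⟨hc, hs⟩ := IH δ (Order.lt_succ δ)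
      rw [fragIter_succ]
      have hcl : IsClosed (frag η ε (fragIter η ε A δ)) := isClosed_frag η ε hc.isClosed
      exact ⟨hc.of_isClosed_subset hcl (frag_subset _ _ _), (frag_subset _ _ _).trans hs⟩
    · rw [fragIter_limit η ε A hlim]
      have hsub : (⋂ β : {β : Ordinal.{0} // β < γ}, fragIter η ε A β.1) ⊆ A := by
        refine (Set.iInter_subset _ ⟨0, hlim.pos⟩).trans ?_
        rw [fragIter_zero]
      refine ⟨hA.of_isClosed_subset
        (isClosed_iInter fun β => (IH β.1 β.2).1.isClosed) hsub, hsub⟩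

lemma frag_mono {η : Set F → ℝ}
    (hmono : ∀ A B : Set F, IsCompact A → IsCompact B → A ⊆ B → η A ≤ η B)
    {A B : Set F} (hA : IsCompact A) (hB : IsCompact B) (hAB : A ⊆ B)
    {ε ε' : ℝ} (hε : ε' ≤ ε) : frag η ε A ⊆ frag η ε' B := by
  rintro x ⟨hxA, hx⟩
  refine ⟨hAB hxA, fun U hU => hε.trans ((hx U hU).trans (hmono _ _ ?_ ?_ ?_))⟩
  · exact hA.inter_right isClosed_closure
  · exact hB.inter_right isClosed_closure
  · exact Set.inter_subset_inter_left _ hAB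

lemma fragIter_mono {η : Set F → ℝ}
    (hmono : ∀ A B : Set F, IsCompact A → IsCompact B → A ⊆ B → η A ≤ η B)
    {A B : Set F} (hA : IsCompact A) (hB : IsCompact B) (hAB : A ⊆ B)
    {ε ε' : ℝ} (hε : ε' ≤ ε) :
    ∀ γ : Ordinal.{0}, fragIter η ε A γ ⊆ fragIter η ε' B γ := by
  intro γ
  induction γ using Ordinal.induction with
  | _ γ IH =>
    rcases Ordinal.zero_or_succ_or_isSuccLimit γ with h0 | ⟨δ, rfl⟩ | hlim
    · subst h0; rw [fragIter_zero, fragIter_zero]; exact hAB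
    · rw [fragIter_succ, fragIter_succ]
      exact frag_mono hmono (fragIter_isCompact η ε hA δ).1
        (fragIter_isCompact η ε' hB δ).1 (IH δ (Order.lt_succ δ)) hε
    · rw [fragIter_limit η ε A hlim, fragIter_limit η ε' B hlim]
      exact Set.iInter_mono fun β => IH β.1 β.2

lemma fragIter_add (η : Set F → ℝ) (ε : ℝ) (A : Set F) (α : Ordinal.{0}) :
    ∀ β : Ordinal.{0},
      fragIter η ε A (α + β) = fragIter η ε (fragIter η ε A α) β := by
  intro β
  induction β using Ordinal.induction with
  | _ β IH =>
    rcases Ordinal.zero_or_succ_or_isSuccLimit β with h0 | ⟨δ, rfl⟩ | hlim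
    · subst h0; rw [add_zero, fragIter_zero]
    · rw [Ordinal.add_succ, fragIter_succ, fragIter_succ, IH δ (Order.lt_succ δ)]
    · rw [fragIter_limit η ε (fragIter η ε A α) hlim,
        fragIter_limit η ε A (Ordinal.isSuccLimit_add α hlim)]
      apply Set.Subset.antisymm
      · refine Set.subset_iInter fun b => ?_
        rw [← IH b.1 b.2]
        exact Set.iInter_subset _ (⟨α + b.1, (add_lt_add_iff_left α).mpr b.2⟩ :
          {b' : Ordinal.{0} // b' < α + β})
      · refine Set.subset_iInter fun b => ?_
        rcases le_or_gt α b.1 with hle | hlt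
        · have hb : α + (b.1 - α) = b.1 := Ordinal.add_sub_cancel_of_le hle
          have h2 : b.1 - α < β := by
            rw [← add_lt_add_iff_left α, hb]; exact b.2
          refine (Set.iInter_subset _ ⟨b.1 - α, h2⟩).trans ?_
          rw [← IH _ h2, hb]
        · refine (Set.iInter_subset _ ⟨0, hlim.pos⟩).trans ?_
          rw [← IH 0 hlim.pos, add_zero]
          exact fragIter_antitone η ε A α b.1 hlt.le

end Aux

section AuxAffine

variable {F : Type*} [TopologicalSpace F] [AddCommGroup F] [Module ℝ F]

/-- The affine map `t ↦ ½ t + c`. -/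
def halfMap (c : F) : F → F := fun t => (2⁻¹ : ℝ) • t + c

variable [ContinuousAdd F] [ContinuousConstSMul ℝ F]

lemma continuous_halfMap (c : F) : Continuous (halfMap c) :=
  (continuous_id.const_smul _).add continuous_const

lemma eta_halfMap {η : Set F → ℝ}
    (hhom : ∀ (l : ℝ) (A : Set F), IsCompact A → η (l • A) = |l| * η A)
    (htrans : ∀ (x : F) (A : Set F), IsCompact A → η ((fun a => a + x) '' A) = η A)
    (c : F) {T : Set F} (hT : IsCompact T) :
    η (halfMap c '' T) = 2⁻¹ * η T := by
  have h1 : halfMap c '' T = (fun a => a + c) '' ((2⁻¹ : ℝ) • T) := by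
    rw [← Set.image_smul, Set.image_image]; rfl
  have h2 : IsCompact ((2⁻¹ : ℝ) • T) := by
    rw [← Set.image_smul]; exact hT.image (continuous_const_smul _)
  rw [h1, htrans c _ h2, hhom 2⁻¹ T hT, abs_of_pos (by norm_num : (0:ℝ) < 2⁻¹)]

lemma frag_halfMap {η : Set F → ℝ}
    (hmono : ∀ A B : Set F, IsCompact A → IsCompact B → A ⊆ B → η A ≤ η B)
    (hhom : ∀ (l : ℝ) (A : Set F), IsCompact A → η (l • A) = |l| * η A)
    (htrans : ∀ (x : F) (A : Set F), IsCompact A → η ((fun a => a + x) '' A) = η A)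
    (c : F) {S : Set F} (hS : IsCompact S) (ε : ℝ) :
    halfMap c '' frag η ε S ⊆ frag η (ε / 2) (halfMap c '' S) := by
  rintro _ ⟨x, hx, rfl⟩
  refine ⟨Set.mem_image_of_mem _ hx.1, fun U hU => ?_⟩
  have hV : halfMap c ⁻¹' U ∈ 𝓝 x :=
    (continuous_halfMap c).continuousAt.preimage_mem_nhds hU
  have h1 : ε ≤ η (S ∩ closure (halfMap c ⁻¹' U)) := hx.2 _ hV
  have hT : IsCompact (S ∩ closure (halfMap c ⁻¹' U)) :=
    hS.inter_right isClosed_closure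
  have hsub : halfMap c '' (S ∩ closure (halfMap c ⁻¹' U)) ⊆
      (halfMap c '' S) ∩ closure U := by
    rintro _ ⟨t, ⟨htS, htV⟩, rfl⟩
    refine ⟨Set.mem_image_of_mem _ htS, ?_⟩
    exact closure_mono (Set.image_preimage_subset _ U)
      (image_closure_subset_closure_image (continuous_halfMap c)
        (Set.mem_image_of_mem _ htV))
  have h2 : η (halfMap c '' (S ∩ closure (halfMap c ⁻¹' U)))
      = 2⁻¹ * η (S ∩ closure (halfMap c ⁻¹' U)) := eta_halfMap hhom htrans c hT
  have h3 : η (halfMap c '' (S ∩ closure (halfMap c ⁻¹' U)))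
      ≤ η ((halfMap c '' S) ∩ closure U) :=
    hmono _ _ (hT.image (continuous_halfMap c))
      ((hS.image (continuous_halfMap c)).inter_right isClosed_closure) hsub
  calc ε / 2 = 2⁻¹ * ε := by ring
  _ ≤ 2⁻¹ * η (S ∩ closure (halfMap c ⁻¹' U)) := by linarith
  _ = η (halfMap c '' (S ∩ closure (halfMap c ⁻¹' U))) := h2.symm
  _ ≤ _ := h3

variable [T2Space F]

lemma fragIter_halfMap {η : Set F → ℝ}
    (hmono : ∀ A B : Set F, IsCompact A → IsCompact B → A ⊆ B → η A ≤ η B)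
    (hhom : ∀ (l : ℝ) (A : Set F), IsCompact A → η (l • A) = |l| * η A)
    (htrans : ∀ (x : F) (A : Set F), IsCompact A → η ((fun a => a + x) '' A) = η A)
    (c : F) {S : Set F} (hS : IsCompact S) (ε : ℝ) :
    ∀ γ : Ordinal.{0},
      halfMap c '' fragIter η ε S γ ⊆ fragIter η (ε / 2) (halfMap c '' S) γ := by
  intro γ
  induction γ using Ordinal.induction with
  | _ γ IH =>
    rcases Ordinal.zero_or_succ_or_isSuccLimit γ with h0 | ⟨δ, rfl⟩ | hlim
    · subst h0; rw [fragIter_zero, fragIter_zero]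
    · rw [fragIter_succ, fragIter_succ]
      refine (frag_halfMap hmono hhom htrans c (fragIter_isCompact η ε hS δ).1 ε).trans ?_
      exact frag_mono hmono ((fragIter_isCompact η ε hS δ).1.image (continuous_halfMap c))
        (fragIter_isCompact η (ε/2) (hS.image (continuous_halfMap c)) δ).1
        (IH δ (Order.lt_succ δ)) le_rfl
    · rw [fragIter_limit η ε S hlim, fragIter_limit η (ε/2) _ hlim]
      exact (Set.image_iInter_subset _ _).trans (Set.iInter_mono fun β => IH β.1 β.2)

lemma half_add_half {η : Set F → ℝ}
    (hmono : ∀ A B : Set F, IsCompact A → IsCompact B → A ⊆ B → η A ≤ η B)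
    (hhom : ∀ (l : ℝ) (A : Set F), IsCompact A → η (l • A) = |l| * η A)
    (htrans : ∀ (x : F) (A : Set F), IsCompact A → η ((fun a => a + x) '' A) = η A)
    {K : Set F} (hK : IsCompact K) (hKc : Convex ℝ K) (ε : ℝ) :
    ∀ α : Ordinal.{0}, ∀ x ∈ fragIter η ε K α, ∀ y ∈ K,
      (2⁻¹ : ℝ) • x + (2⁻¹ : ℝ) • y ∈ fragIter η (ε / 2) K α := by
  intro α
  induction α using Ordinal.induction with
  | _ α IH =>
    intro x hx y hy
    rcases Ordinal.zero_or_succ_or_isSuccLimit α with h0 | ⟨δ, rfl⟩ | hlim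
    · subst h0; rw [fragIter_zero] at hx ⊢
      exact hKc hx hy (by norm_num) (by norm_num) (by norm_num)
    · rw [fragIter_succ] at hx ⊢
      have hSc : IsCompact (fragIter η ε K δ) := (fragIter_isCompact η ε hK δ).1
      have hBc : IsCompact (fragIter η (ε/2) K δ) := (fragIter_isCompact η (ε/2) hK δ).1
      refine ⟨IH δ (Order.lt_succ δ) x hx.1 y hy, fun U hU => ?_⟩
      have hU' : U ∈ 𝓝 (halfMap ((2⁻¹ : ℝ) • y) x) := hU
      have hV : halfMap ((2⁻¹ : ℝ) • y) ⁻¹' U ∈ 𝓝 x :=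
        (continuous_halfMap _).continuousAt.preimage_mem_nhds hU'
      have h1 : ε ≤ η (fragIter η ε K δ ∩ closure (halfMap ((2⁻¹ : ℝ) • y) ⁻¹' U)) :=
        hx.2 _ hV
      have hT : IsCompact (fragIter η ε K δ ∩ closure (halfMap ((2⁻¹ : ℝ) • y) ⁻¹' U)) :=
        hSc.inter_right isClosed_closure
      have hsub : halfMap ((2⁻¹ : ℝ) • y) ''
          (fragIter η ε K δ ∩ closure (halfMap ((2⁻¹ : ℝ) • y) ⁻¹' U)) ⊆
          fragIter η (ε/2) K δ ∩ closure U := by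
        rintro _ ⟨t, ⟨htS, htV⟩, rfl⟩
        refine ⟨IH δ (Order.lt_succ δ) t htS y hy, ?_⟩
        exact closure_mono (Set.image_preimage_subset _ U)
          (image_closure_subset_closure_image (continuous_halfMap _)
            (Set.mem_image_of_mem _ htV))
      have h2 := eta_halfMap hhom htrans ((2⁻¹ : ℝ) • y) hT
      have h3 : η (halfMap ((2⁻¹ : ℝ) • y) ''
          (fragIter η ε K δ ∩ closure (halfMap ((2⁻¹ : ℝ) • y) ⁻¹' U)))
          ≤ η (fragIter η (ε/2) K δ ∩ closure U) :=
        hmono _ _ (hT.image (continuous_halfMap _))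
          (hBc.inter_right isClosed_closure) hsub
      calc ε / 2 = 2⁻¹ * ε := by ring
      _ ≤ 2⁻¹ * η (fragIter η ε K δ ∩ closure (halfMap ((2⁻¹ : ℝ) • y) ⁻¹' U)) := by
        linarith
      _ = η (halfMap ((2⁻¹ : ℝ) • y) ''
          (fragIter η ε K δ ∩ closure (halfMap ((2⁻¹ : ℝ) • y) ⁻¹' U))) := h2.symm
      _ ≤ _ := h3
    · rw [fragIter_limit η ε K hlim] at hx
      rw [fragIter_limit η (ε/2) K hlim]
      exact Set.mem_iInter.mpr fun β => IH β.1 β.2 x (Set.mem_iInter.mp hx β) y hy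

lemma fragIter_double {η : Set F → ℝ}
    (hmono : ∀ A B : Set F, IsCompact A → IsCompact B → A ⊆ B → η A ≤ η B)
    (hhom : ∀ (l : ℝ) (A : Set F), IsCompact A → η (l • A) = |l| * η A)
    (htrans : ∀ (x : F) (A : Set F), IsCompact A → η ((fun a => a + x) '' A) = η A)
    {K : Set F} (hK : IsCompact K) (hKc : Convex ℝ K) (ε : ℝ) (α : Ordinal.{0}) :
    fragIter η ε K α ⊆ fragIter η (ε / 2) K (α + α) := by
  intro x hx
  have hfix : halfMap ((2⁻¹ : ℝ) • x) x = x := by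
    show (2⁻¹ : ℝ) • x + (2⁻¹ : ℝ) • x = x
    rw [← add_smul]; norm_num
  have h2 : x ∈ fragIter η (ε/2) (halfMap ((2⁻¹ : ℝ) • x) '' K) α :=
    fragIter_halfMap hmono hhom htrans _ hK ε α ⟨x, hx, hfix⟩
  have h3 : halfMap ((2⁻¹ : ℝ) • x) '' K ⊆ fragIter η (ε/2) K α := by
    rintro _ ⟨y, hy, rfl⟩
    have h := half_add_half hmono hhom htrans hK hKc ε α x hx y hy
    show (2⁻¹ : ℝ) • y + (2⁻¹ : ℝ) • x ∈ _
    rwa [add_comm]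
  have h4 := fragIter_mono hmono (hK.image (continuous_halfMap _))
    (fragIter_isCompact η (ε/2) hK α).1 h3 (le_refl (ε/2)) α
  rw [fragIter_add]
  exact h4 h2

end AuxAffine

/-- Let `K` be a convex weak*-compact subset of `X*` and `η` a homogeneous and
translation-invariant measure of non compactness on `X*`. Then
(i) `½ [η]^α_ε(K) + ½ K ⊆ [η]^α_{ε/2}(K)` for every `ε > 0` and ordinal `α`;
(ii) `[η]^α_ε(K) ⊆ [η]^{α·2ⁿ}_{ε/2ⁿ}(K)` for every `ε > 0`, `n ∈ ℕ` and ordinal `α`. -/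
theorem fragIter_convex_combination
    {X : Type*} [NormedAddCommGroup X] [NormedSpace ℝ X] [CompleteSpace X]
    (η : Set (WeakDual ℝ X) → ℝ) (hη : IsMNCOn (dualBall X) η)
    (hhom : ∀ (l : ℝ) (A : Set (WeakDual ℝ X)), IsCompact A → η (l • A) = |l| * η A)
    (htrans : ∀ (x : WeakDual ℝ X) (A : Set (WeakDual ℝ X)), IsCompact A →
      η ((fun a => a + x) '' A) = η A)
    (K : Set (WeakDual ℝ X)) (hK : IsCompact K) (hKc : Convex ℝ K) :
    (∀ ε : ℝ, 0 < ε → ∀ α : Ordinal.{0},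
      (2⁻¹ : ℝ) • fragIter η ε K α + (2⁻¹ : ℝ) • K ⊆ fragIter η (ε / 2) K α) ∧
    (∀ ε : ℝ, 0 < ε → ∀ (n : ℕ) (α : Ordinal.{0}),
      fragIter η ε K α ⊆ fragIter η (ε / 2 ^ n) K (α * 2 ^ n)) := by
  have hmono := hη.mono
  constructor
  · intro ε _ α z hz
    obtain ⟨a, ha, b, hb, rfl⟩ := Set.mem_add.mp hz
    obtain ⟨x, hx, rfl⟩ := Set.mem_smul_set.mp ha
    obtain ⟨y, hy, rfl⟩ := Set.mem_smul_set.mp hb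
    exact half_add_half hmono hhom htrans hK hKc ε α x hx y hy
  · intro ε _ n α
    have hmul2 : ∀ o : Ordinal.{0}, o * 2 = o + o := fun o => by
      rw [show (2 : Ordinal.{0}) = 1 + 1 from one_add_one_eq_two.symm, mul_add, mul_one]
    induction n with
    | zero => simpa using subset_rfl
    | succ n IH =>
      refine IH.trans ?_
      have h := fragIter_double hmono hhom htrans hK hKc (ε / 2 ^ n) (α * 2 ^ n)
      have he : ε / 2 ^ n / 2 = ε / 2 ^ (n + 1) := by
        rw [div_div, ← pow_succ]
      have ho : α * 2 ^ n + α * 2 ^ n = α * 2 ^ (n + 1) := by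
        rw [pow_succ, ← mul_assoc, hmul2]
      rw [he, ho] at h
      exact h

end Szlenk
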